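/- Consider the 6-dimensional real Lie algebra g̃ ≅ g_{5.7}^{1,-1,-1} ⊕ ℝ with basis X₁,…,X₆ and nonzero brackets [X₁,X₅] = pX₁, [X₂,X₅] = pX₂, [X₃,X₅] = -pX₃, [X₄,X₅] = -pX₄ for some p ≠ 0. Its Chevalley–Eilenberg cohomology satisfies b₁ = 2, b₂ = 5, b₃ = 8, with H¹ = ⟨α⁵, α⁶⟩, H² = ⟨α¹³, α¹⁴, α²³, α²⁴, α⁵⁶⟩. -/
import Mathlib


/-!
STATEMENT 11: The Lie algebra g̃ ≅ g_{5.7}^{1,-1,-1} ⊕ ℝ with nonzero brackets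
[X₁,X₅] = pX₁, [X₂,X₅] = pX₂, [X₃,X₅] = −pX₃, [X₄,X₅] = −pX₄ (p ≠ 0) has
Chevalley–Eilenberg Betti numbers b₁ = 2, b₂ = 5, b₃ = 8, with H¹ = ⟨α⁵,α⁶⟩,
H² = ⟨α¹³,α¹⁴,α²³,α²⁴,α⁵⁶⟩.

The Chevalley–Eilenberg differential satisfies dα¹ = −pα¹∧α⁵, dα² = −pα²∧α⁵,
dα³ = pα³∧α⁵, dα⁴ = pα⁴∧α⁵, dα⁵ = dα⁶ = 0; the complex is modeled concretely below
(indices shifted down by one).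
-/

open Finset Module

/-- The exterior algebra on six degree-one generators α¹,…,α⁶, as coordinates on the
basis of increasing wedge monomials indexed by subsets of `Fin 6`. -/
abbrev Lam : Type := Finset (Fin 6) → ℝ

/-- The basis monomial α^S. -/
noncomputable def gen (S : Finset (Fin 6)) : Lam := Pi.single S 1

/-- Koszul sign when interleaving (the increasing enumerations of) `T` and `U`:
(−1) to the number of inversions. -/
def koszulSign (T U : Finset (Fin 6)) : ℝ :=
  (-1 : ℝ) ^ (((T ×ˢ U).filter fun p => p.2 < p.1).card)

/-- The wedge (exterior) product in coordinates. -/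
noncomputable def wedge (f h : Lam) : Lam := fun S =>
  ∑ T ∈ S.powerset, koszulSign T (S \ T) * f T * h (S \ T)

/-- The Chevalley–Eilenberg differential: the unique antiderivation with dαⁱ = g i,
given on the basis monomial α^S by d α^S = Σ_{i ∈ S} (−1)^{#{j ∈ S | j < i}} (g i) ∧ α^{S∖i}. -/
noncomputable def ceDiff (g : Fin 6 → Lam) : Lam →ₗ[ℝ] Lam :=
  (Pi.basisFun ℝ (Finset (Fin 6))).constr ℝ fun S =>
    ∑ i ∈ S, ((-1 : ℝ) ^ ((S.filter fun j => j < i).card)) • wedge (g i) (gen (S.erase i))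

/-- The subspace Λᵏ of homogeneous elements of degree `k`. -/
def degSub (k : ℕ) : Submodule ℝ Lam where
  carrier := {f | ∀ S : Finset (Fin 6), S.card ≠ k → f S = 0}
  add_mem' := by
    intro f g hf hg S hS
    simp only [Pi.add_apply, hf S hS, hg S hS, add_zero]
  zero_mem' := by intro S hS; rfl
  smul_mem' := by
    intro c f hf S hS
    simp only [Pi.smul_apply, hf S hS, smul_zero]

/-- Closed k-forms. -/
noncomputable def Zspace (D : Lam →ₗ[ℝ] Lam) (k : ℕ) : Submodule ℝ Lam :=
  degSub k ⊓ LinearMap.ker D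

/-- Exact k-forms (the image of the (k−1)-forms under the differential). -/
noncomputable def Bspace (D : Lam →ₗ[ℝ] Lam) (k : ℕ) : Submodule ℝ Lam :=
  (degSub (k - 1)).map D

/-- Generator differentials (0-indexed). -/
noncomputable def gDiff (p : ℝ) : Fin 6 → Lam :=
  ![(-p) • gen {0, 4}, (-p) • gen {1, 4}, p • gen {2, 4}, p • gen {3, 4}, 0, 0]

open Finset Module
section
variable (p : ℝ)

lemma gen_apply (S T : Finset (Fin 6)) : gen S T = if T = S then 1 else 0 := Pi.single_apply S 1 T

lemma wedge_smul_left (c : ℝ) (f h : Lam) : wedge (c • f) h = c • wedge f h := by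
  funext S
  simp only [wedge, Pi.smul_apply, smul_eq_mul, Finset.mul_sum]
  exact Finset.sum_congr rfl fun T _ => by ring

lemma wedge_zero_left (h : Lam) : wedge (0 : Lam) h = 0 := by
  funext S; simp [wedge]

lemma wedge_gen_gen (A B : Finset (Fin 6)) :
    wedge (gen A) (gen B) = fun S => if A ⊆ S ∧ S \ A = B then koszulSign A B else 0 := by
  funext S
  simp only [wedge, gen_apply]
  have : ∀ T ∈ S.powerset,
      koszulSign T (S \ T) * (if T = A then 1 else 0) * (if S \ T = B then 1 else 0)
      = if T = A then (koszulSign A (S \ A) * if S \ A = B then (1:ℝ) else 0) else 0 := by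
    intro T _
    by_cases h : T = A
    · subst h; simp
    · simp [h]
  rw [Finset.sum_congr rfl this, Finset.sum_ite_eq' S.powerset A]
  by_cases hA : A ⊆ S
  · by_cases hB : S \ A = B
    · rw [if_pos (Finset.mem_powerset.2 hA), if_pos hB, if_pos ⟨hA, hB⟩, hB, mul_one]
    · rw [if_pos (Finset.mem_powerset.2 hA), if_neg hB, if_neg (fun h => hB h.2), mul_zero]
  · rw [if_neg (fun h => hA (Finset.mem_powerset.1 h)), if_neg (fun h => hA h.1)]

lemma wedge_gen_gen_disj (A B : Finset (Fin 6)) (h : Disjoint A B) :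
    wedge (gen A) (gen B) = koszulSign A B • gen (A ∪ B) := by
  rw [wedge_gen_gen]
  funext S
  simp only [Pi.smul_apply, gen_apply, smul_eq_mul]
  by_cases hS : S = A ∪ B
  · rw [if_pos, if_pos hS, mul_one]
    subst hS
    exact ⟨Finset.subset_union_left, Finset.union_sdiff_cancel_left h⟩
  · rw [if_neg, if_neg hS, mul_zero]
    rintro ⟨h1, h2⟩
    exact hS (by rw [← h2, Finset.union_sdiff_of_subset h1])

lemma wedge_gen_gen_ndisj (A B : Finset (Fin 6)) (h : ¬ Disjoint A B) :
    wedge (gen A) (gen B) = 0 := by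
  rw [wedge_gen_gen]
  funext S
  rw [if_neg, Pi.zero_apply]
  rintro ⟨h1, h2⟩
  exact h (by rw [← h2]; exact Finset.disjoint_sdiff)

lemma ceDiff_gen (g : Fin 6 → Lam) (S : Finset (Fin 6)) :
    ceDiff g (gen S) =
      ∑ i ∈ S, ((-1 : ℝ) ^ ((S.filter fun j => j < i).card)) • wedge (g i) (gen (S.erase i)) := by
  have : gen S = Pi.basisFun ℝ (Finset (Fin 6)) S := by
    simp [gen, Pi.basisFun_apply]
  rw [ceDiff, this, Basis.constr_basis]
end

open Finset Module
section
variable (p : ℝ)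

/-- coefficient table for dαⁱ = cvec i • α^{i,4} -/
noncomputable def cvec (p : ℝ) : Fin 6 → ℝ := ![-p, -p, p, p, 0, 0]

lemma gDiff_eq (i : Fin 6) : gDiff p i = cvec p i • gen (insert i {4}) := by
  fin_cases i
  · show _ = cvec p 0 • gen (insert 0 {4}); rw [show cvec p 0 = -p from rfl]; rfl
  · show _ = cvec p 1 • gen (insert 1 {4}); rw [show cvec p 1 = -p from rfl]; rfl
  · show _ = cvec p 2 • gen (insert 2 {4}); rw [show cvec p 2 = p from rfl]; rfl
  · show _ = cvec p 3 • gen (insert 3 {4}); rw [show cvec p 3 = p from rfl]; rfl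
  · show _ = cvec p 4 • gen (insert 4 {4}); rw [show cvec p 4 = 0 from rfl, zero_smul]; rfl
  · show _ = cvec p 5 • gen (insert 5 {4}); rw [show cvec p 5 = 0 from rfl, zero_smul]; rfl

noncomputable def dcoef (p : ℝ) (S : Finset (Fin 6)) : ℝ :=
  if 4 ∈ S then 0 else
    ∑ i ∈ S, ((-1 : ℝ) ^ ((S.filter fun j => j < i).card)) * cvec p i *
      koszulSign (insert i {4}) (S.erase i)

lemma dgen (S : Finset (Fin 6)) :
    ceDiff (gDiff p) (gen S) = dcoef p S • gen (insert 4 S) := by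
  rw [ceDiff_gen]
  by_cases h4 : 4 ∈ S
  · rw [dcoef, if_pos h4, zero_smul]
    apply Finset.sum_eq_zero
    intro i hi
    rw [gDiff_eq, wedge_smul_left]
    by_cases hi4 : i = 4
    · subst hi4; simp [cvec]
    · rw [wedge_gen_gen_ndisj, smul_zero, smul_zero]
      rw [Finset.not_disjoint_iff]
      exact ⟨4, by simp, Finset.mem_erase.2 ⟨Ne.symm hi4, h4⟩⟩
  · rw [dcoef, if_neg h4, Finset.sum_smul]
    apply Finset.sum_congr rfl
    intro i hi
    have hdisj : Disjoint (insert i ({4} : Finset (Fin 6))) (S.erase i) := by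
      rw [Finset.disjoint_left]
      intro a ha
      simp only [Finset.mem_insert, Finset.mem_singleton] at ha
      rcases ha with rfl | rfl
      · exact fun h => (Finset.mem_erase.1 h).1 rfl
      · exact fun h => h4 (Finset.mem_erase.1 h).2
    rw [gDiff_eq, wedge_smul_left, wedge_gen_gen_disj _ _ hdisj, smul_smul, smul_smul]
    congr 1
    rw [Finset.insert_union, show ({4} : Finset (Fin 6)) ∪ S.erase i = insert 4 (S.erase i) from rfl, Finset.insert_comm,
      Finset.insert_erase hi]
end

open Finset Module
section
def icvec : Fin 6 → ℤ := ![-1, -1, 1, 1, 0, 0]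

def icoef (S : Finset (Fin 6)) : ℤ :=
  if 4 ∈ S then 0 else
    ∑ i ∈ S, (-1 : ℤ) ^ ((S.filter fun j => j < i).card) * icvec i *
      (-1 : ℤ) ^ ((((insert i {4}) ×ˢ (S.erase i)).filter fun p => p.2 < p.1).card)

lemma cvec_eq (p : ℝ) (i : Fin 6) : cvec p i = (icvec i : ℝ) * p := by
  fin_cases i <;> norm_num [cvec, icvec]

lemma dcoef_eq (p : ℝ) (S : Finset (Fin 6)) : dcoef p S = (icoef S : ℝ) * p := by
  rw [dcoef, icoef]
  by_cases h4 : 4 ∈ S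
  · rw [if_pos h4, if_pos h4]; norm_num
  · rw [if_neg h4, if_neg h4]
    push_cast
    rw [Finset.sum_mul]
    apply Finset.sum_congr rfl
    intro i _
    rw [cvec_eq, koszulSign]
    ring
example (p : ℝ) : dcoef p {0,1} = 2*p := by
  rw [dcoef_eq, show icoef {0,1} = 2 from by decide]; norm_num
example (p : ℝ) : dcoef p {0,2} = 0 := by
  rw [dcoef_eq, show icoef {0,2} = 0 from by decide]; norm_num
example (p : ℝ) (hp : p ≠ 0) : dcoef p {2,3,5} ≠ 0 := by
  rw [dcoef_eq, show icoef {2,3,5} = -2 from by decide]; norm_num [hp]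
end

open Finset Module
section
variable (p : ℝ)

lemma single_eq_smul_gen (S : Finset (Fin 6)) (c : ℝ) : Pi.single S c = c • gen S := by
  funext T
  rw [Pi.smul_apply, gen_apply, Pi.single_apply]
  split_ifs <;> simp

lemma lam_decomp (f : Lam) : f = ∑ S : Finset (Fin 6), f S • gen S := by
  conv_lhs => rw [← Finset.univ_sum_single f]
  exact Finset.sum_congr rfl fun S _ => single_eq_smul_gen S (f S)

lemma D_apply (f : Lam) (T : Finset (Fin 6)) :
    ceDiff (gDiff p) f T =
      ∑ S : Finset (Fin 6), f S * dcoef p S * (if T = insert 4 S then 1 else 0) := by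
  conv_lhs => rw [lam_decomp f, map_sum]
  rw [Finset.sum_apply]
  apply Finset.sum_congr rfl
  intro S _
  rw [map_smul, dgen, Pi.smul_apply, Pi.smul_apply, gen_apply, smul_eq_mul, smul_eq_mul]
  ring

lemma ker_constraint (f : Lam) (hf : ceDiff (gDiff p) f = 0) (S₀ : Finset (Fin 6))
    (h4 : 4 ∉ S₀) (hc : dcoef p S₀ ≠ 0) : f S₀ = 0 := by
  have h : ceDiff (gDiff p) f (insert 4 S₀) = 0 := by rw [hf]; rfl
  rw [D_apply] at h
  rw [Finset.sum_eq_single S₀] at h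
  · rw [if_pos rfl, mul_one] at h
    exact (mul_eq_zero.1 h).resolve_right hc
  · intro S _ hS
    by_cases h4S : 4 ∈ S
    · rw [dcoef, if_pos h4S, mul_zero, zero_mul]
    · rw [if_neg, mul_zero]
      intro he
      exact hS (by rw [← Finset.erase_insert h4S, ← he, Finset.erase_insert h4])
  · intro h; exact absurd (Finset.mem_univ S₀) h

lemma mem_span_of_support (𝒮 : Set (Finset (Fin 6))) (f : Lam)
    (h : ∀ S, f S ≠ 0 → S ∈ 𝒮) : f ∈ Submodule.span ℝ (gen '' 𝒮) := by
  rw [lam_decomp f]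
  apply Submodule.sum_mem
  intro S _
  by_cases hS : f S = 0
  · rw [hS, zero_smul]; exact Submodule.zero_mem _
  · exact Submodule.smul_mem _ _ (Submodule.subset_span ⟨S, h S hS, rfl⟩)

lemma gen_mem_degSub {S : Finset (Fin 6)} {k : ℕ} (h : S.card = k) : gen S ∈ degSub k := by
  intro T hT
  rw [gen_apply, if_neg]
  intro e; exact hT (e ▸ h)

lemma degSub_eq_span (k : ℕ) : degSub k = Submodule.span ℝ (gen '' {S | S.card = k}) := by
  apply le_antisymm
  · intro f hf
    exact mem_span_of_support _ f fun S hS => by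
      by_contra hc; exact hS (hf S hc)
  · rw [Submodule.span_le]
    rintro _ ⟨S, hS, rfl⟩
    exact gen_mem_degSub hS

lemma finrank_span_gens (𝒮 : Finset (Finset (Fin 6))) :
    finrank ℝ (Submodule.span ℝ (gen '' ↑𝒮)) = 𝒮.card := by
  have hgen : gen = ⇑(Pi.basisFun ℝ (Finset (Fin 6))) := by
    funext S; simp [gen, Pi.basisFun_apply]
  have hli : LinearIndependent ℝ (fun s : ↥(↑𝒮 : Set (Finset (Fin 6))) => gen s.1) := by
    rw [hgen]
    exact (Pi.basisFun ℝ (Finset (Fin 6))).linearIndependent.comp _ Subtype.val_injective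
  have h2 := finrank_span_eq_card hli
  rw [← Set.image_eq_range] at h2
  rw [h2]
  simp
end

open Finset Module
section
variable (p : ℝ)

lemma dcoef_zero {S : Finset (Fin 6)} (h : icoef S = 0) : dcoef p S = 0 := by
  rw [dcoef_eq, h]; norm_num

lemma dcoef_ne_zero {S : Finset (Fin 6)} (hp : p ≠ 0) (h : icoef S ≠ 0) : dcoef p S ≠ 0 := by
  rw [dcoef_eq]
  exact mul_ne_zero (Int.cast_ne_zero.2 h) hp

lemma Z_eq (hp : p ≠ 0) (k : ℕ) (zk bad : Finset (Finset (Fin 6)))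
    (hall : ∀ S : Finset (Fin 6), S.card = k → S ∈ zk ∨ S ∈ bad)
    (hz : ∀ S ∈ zk, S.card = k ∧ icoef S = 0)
    (hb : ∀ S ∈ bad, 4 ∉ S ∧ icoef S ≠ 0) :
    Zspace (ceDiff (gDiff p)) k = Submodule.span ℝ (gen '' ↑zk) := by
  apply le_antisymm
  · intro f hf
    obtain ⟨hdeg, hker⟩ := Submodule.mem_inf.1 hf
    rw [LinearMap.mem_ker] at hker
    apply mem_span_of_support
    intro S hS
    have hcard : S.card = k := by
      by_contra hc; exact hS (hdeg S hc)
    rcases hall S hcard with h | h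
    · exact h
    · obtain ⟨h4, hic⟩ := hb S h
      exact absurd (ker_constraint p f hker S h4 (dcoef_ne_zero p hp hic)) hS
  · rw [Submodule.span_le]
    rintro _ ⟨S, hS, rfl⟩
    rw [Finset.mem_coe] at hS
    obtain ⟨hcard, hic⟩ := hz S hS
    refine Submodule.mem_inf.2 ⟨gen_mem_degSub hcard, LinearMap.mem_ker.2 ?_⟩
    rw [dgen, dcoef_zero p hic, zero_smul]

lemma B_eq (hp : p ≠ 0) (k : ℕ) (bk : Finset (Finset (Fin 6)))
    (him : ∀ S : Finset (Fin 6), S.card = k - 1 → icoef S ≠ 0 → insert 4 S ∈ bk)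
    (hsur : ∀ T ∈ bk, ∃ S : Finset (Fin 6), S.card = k - 1 ∧ icoef S ≠ 0 ∧ insert 4 S = T) :
    Bspace (ceDiff (gDiff p)) k = Submodule.span ℝ (gen '' ↑bk) := by
  rw [Bspace, degSub_eq_span, Submodule.map_span]
  apply le_antisymm
  · rw [Submodule.span_le]
    rintro _ ⟨_, ⟨S, hS, rfl⟩, rfl⟩
    rw [dgen]
    by_cases hic : icoef S = 0
    · rw [dcoef_zero p hic, zero_smul]; exact Submodule.zero_mem _
    · exact Submodule.smul_mem _ _
        (Submodule.subset_span ⟨insert 4 S, Finset.mem_coe.2 (him S hS hic), rfl⟩)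
  · rw [Submodule.span_le]
    rintro _ ⟨T, hT, rfl⟩
    obtain ⟨S, hcard, hic, rfl⟩ := hsur T (Finset.mem_coe.1 hT)
    have hd := dcoef_ne_zero p hp hic
    have : gen (insert 4 S) = (dcoef p S)⁻¹ • (ceDiff (gDiff p) (gen S)) := by
      rw [dgen, smul_smul, inv_mul_cancel₀ hd, one_smul]
    rw [this]
    exact Submodule.smul_mem _ _
      (Submodule.subset_span ⟨gen S, ⟨S, hcard, rfl⟩, rfl⟩)
end

open Finset Module in
lemma span_union_gens (a b : Finset (Finset (Fin 6))) :
    Submodule.span ℝ (gen '' ↑a) ⊔ Submodule.span ℝ (gen '' ↑b)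
      = Submodule.span ℝ (gen '' ↑(a ∪ b)) := by
  rw [← Submodule.span_union, ← Set.image_union, ← Finset.coe_union]

set_option maxRecDepth 4000

theorem cohomology_g57_oplus_R (p : ℝ) (hp : p ≠ 0) :
    (finrank ℝ (Zspace (ceDiff (gDiff p)) 1) = finrank ℝ (Bspace (ceDiff (gDiff p)) 1) + 2 ∧
      Zspace (ceDiff (gDiff p)) 1 = Bspace (ceDiff (gDiff p)) 1 ⊔
        Submodule.span ℝ {gen {4}, gen {5}}) ∧
    (finrank ℝ (Zspace (ceDiff (gDiff p)) 2) = finrank ℝ (Bspace (ceDiff (gDiff p)) 2) + 5 ∧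
      Zspace (ceDiff (gDiff p)) 2 = Bspace (ceDiff (gDiff p)) 2 ⊔
        Submodule.span ℝ {gen {0, 2}, gen {0, 3}, gen {1, 2}, gen {1, 3}, gen {4, 5}}) ∧
    finrank ℝ (Zspace (ceDiff (gDiff p)) 3) = finrank ℝ (Bspace (ceDiff (gDiff p)) 3) + 8 := by
  have hZ1 := Z_eq p hp 1 {{4},{5}} {{0},{1},{2},{3}} (by decide) (by decide) (by decide)
  have hB1 := B_eq p hp 1 ∅ (by decide) (by decide)
  have hZ2 := Z_eq p hp 2 {{0,4},{1,4},{2,4},{3,4},{4,5},{0,2},{0,3},{1,2},{1,3}}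
    {{0,1},{2,3},{0,5},{1,5},{2,5},{3,5}} (by decide) (by decide) (by decide)
  have hB2 := B_eq p hp 2 {{0,4},{1,4},{2,4},{3,4}} (by decide) (by decide)
  have hZ3 := Z_eq p hp 3 {{0,1,4},{0,2,4},{0,3,4},{1,2,4},{1,3,4},{2,3,4},{0,4,5},{1,4,5},
      {2,4,5},{3,4,5},{0,2,5},{0,3,5},{1,2,5},{1,3,5}}
    {{0,1,2},{0,1,3},{0,2,3},{1,2,3},{0,1,5},{2,3,5}} (by decide) (by decide) (by decide)
  have hB3 := B_eq p hp 3 {{0,1,4},{2,3,4},{0,4,5},{1,4,5},{2,4,5},{3,4,5}}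
    (by decide) (by decide)
  refine ⟨⟨?_, ?_⟩, ⟨?_, ?_⟩, ?_⟩
  · rw [hZ1, hB1, finrank_span_gens, finrank_span_gens]
    decide
  · rw [hZ1, hB1]
    rw [show ({gen {4}, gen {5}} : Set Lam) = gen '' ↑({{4},{5}} : Finset (Finset (Fin 6))) by
      simp [Set.image_insert_eq]]
    rw [span_union_gens]
    exact congrArg (fun s : Finset (Finset (Fin 6)) => Submodule.span ℝ (gen '' ↑s)) (by decide)
  · rw [hZ2, hB2, finrank_span_gens, finrank_span_gens]
    decide
  · rw [hZ2, hB2]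
    rw [show ({gen {0,2}, gen {0,3}, gen {1,2}, gen {1,3}, gen {4,5}} : Set Lam)
        = gen '' ↑({{0,2},{0,3},{1,2},{1,3},{4,5}} : Finset (Finset (Fin 6))) by
      simp [Set.image_insert_eq]]
    rw [span_union_gens]
    exact congrArg (fun s : Finset (Finset (Fin 6)) => Submodule.span ℝ (gen '' ↑s)) (by decide)
  · rw [hZ3, hB3, finrank_span_gens, finrank_span_gens]
    decide
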